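/- arXiv:2310.10064 — 2 statements merged into one kernel-verified Lean document; each statement's English description precedes it below -/
import Mathlib

section
/- Let G be a simple graph on Fin N with real Laplacian matrix L = G.lapMatrix ℝ. Suppose μ : Fin N → ℝ and w : Fin N → (Fin N → ℝ) are such that the family w is orthonormal with respect to the standard real inner product and L = Σ_i μ_i • (w_i · w_iᵀ) (i.e., L s t = Σ_i μ_i (w_i s)(w_i t)). Let g : ℝ → ℝ, let x : Fin N → ℝ be a signal with coefficients c_i = Σ_v (w_i v)(x v), and let x' = Σ_i g(μ_i) c_i • w_i be the filtered signal. Then Σ_{(s,t) : G.Adj s t} (x' s − x' t)² = 2 · Σ_{i=1}^N c_i² · μ_i · g(μ_i)², where the sum on the left ranges over ordered pairs of adjacent vertices. -/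
/-- Eq. 14/16 of the proof of Theorem 3.2 for the combinatorial Laplacian: given a
spectral decomposition `L s t = Σ_i μ_i (w_i s)(w_i t)` of `G.lapMatrix ℝ` into
orthonormal eigenvectors `w_i`, Fourier coefficients `c_i = Σ_v (w_i v)(x v)`, and the
filtered signal `x' = Σ_i g(μ_i) c_i • w_i`, the total squared distance of `x'` over
ordered adjacent pairs equals `2 Σ_i c_i² μ_i g(μ_i)²`. -/
theorem stmt8 (N : ℕ) (G : SimpleGraph (Fin N)) [DecidableRel G.Adj]
    (μ : Fin N → ℝ) (w : Fin N → Fin N → ℝ)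
    (horth : ∀ i j : Fin N, ∑ v : Fin N, w i v * w j v = if i = j then (1 : ℝ) else 0)
    (hdecomp : ∀ s t : Fin N, G.lapMatrix ℝ s t = ∑ i : Fin N, μ i * (w i s * w i t))
    (g : ℝ → ℝ) (x : Fin N → ℝ)
    (c : Fin N → ℝ) (hc : ∀ i, c i = ∑ v : Fin N, w i v * x v)
    (x' : Fin N → ℝ) (hx' : ∀ v, x' v = ∑ i : Fin N, g (μ i) * c i * w i v) :
    ∑ p ∈ Finset.univ.filter (fun p : Fin N × Fin N => G.Adj p.1 p.2),
        (x' p.1 - x' p.2) ^ 2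
      = 2 * ∑ i : Fin N, (c i) ^ 2 * μ i * (g (μ i)) ^ 2 := by

  classical
  -- key: ⟨w i, x'⟩ = g (μ i) * c i
  have hkey : ∀ i : Fin N, ∑ s : Fin N, w i s * x' s = g (μ i) * c i := by
    intro i
    simp_rw [hx', Finset.mul_sum]
    rw [Finset.sum_comm]
    have : ∀ j : Fin N, ∑ s : Fin N, w i s * (g (μ j) * c j * w j s)
        = g (μ j) * c j * (if i = j then (1:ℝ) else 0) := by
      intro j
      rw [← horth i j, Finset.mul_sum]
      apply Finset.sum_congr rfl
      intro s _; ring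
    simp_rw [this]
    simp
  -- the quadratic form
  have hq : ∑ s : Fin N, ∑ t : Fin N, x' s * (G.lapMatrix ℝ s t * x' t)
      = ∑ i : Fin N, (c i) ^ 2 * μ i * (g (μ i)) ^ 2 := by
    have : ∀ s t : Fin N, x' s * (G.lapMatrix ℝ s t * x' t)
        = ∑ i : Fin N, μ i * (w i s * x' s) * (w i t * x' t) := by
      intro s t
      rw [hdecomp, Finset.sum_mul, Finset.mul_sum]
      apply Finset.sum_congr rfl
      intro i _; ring
    simp_rw [this]
    rw [Finset.sum_congr rfl fun s _ => Finset.sum_comm, Finset.sum_comm]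
    apply Finset.sum_congr rfl
    intro i _
    have h1 : ∑ s : Fin N, ∑ t : Fin N, μ i * (w i s * x' s) * (w i t * x' t)
        = μ i * (∑ s : Fin N, w i s * x' s) * (∑ t : Fin N, w i t * x' t) := by
      rw [mul_assoc, Finset.sum_mul_sum, Finset.mul_sum]
      apply Finset.sum_congr rfl
      intro s _
      rw [Finset.mul_sum]
      apply Finset.sum_congr rfl
      intro t _; ring
    rw [h1, hkey]
    ring
  have hL := G.lapMatrix_toLinearMap₂' (R := ℝ) x'
  rw [Matrix.toLinearMap₂'_apply'] at hL
  have hdp : dotProduct x' ((G.lapMatrix ℝ).mulVec x')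
      = ∑ s : Fin N, ∑ t : Fin N, x' s * (G.lapMatrix ℝ s t * x' t) := by
    simp [dotProduct, Matrix.mulVec, Finset.mul_sum]
  have hsum : ∑ p ∈ Finset.univ.filter (fun p : Fin N × Fin N => G.Adj p.1 p.2),
        (x' p.1 - x' p.2) ^ 2
      = ∑ s : Fin N, ∑ t : Fin N, if G.Adj s t then (x' s - x' t)^2 else 0 := by
    rw [Finset.sum_filter, ← Finset.sum_product']
    rfl
  rw [hsum]
  have := hL
  rw [hdp, hq] at this
  field_simp at this
  linarith [this]
end

section
/- Let C ≥ 2 and N ≥ 1 be natural numbers, let h ∈ ℝ, and let Δs, d_in¹, d_in², d_out¹, d_out² be real numbers satisfying Δs > 0, d_out¹ − d_out² = (1 − h)·Δs and d_in¹ − d_in² = h·Δs. For i ∈ {1,2} define Δd̄ⁱ = (2C / ((C−1)·N²)) · (d_outⁱ − (C−1)·d_inⁱ). Then Δd̄¹ − Δd̄² = (2C / ((C−1)·N²)) · Δs · (1 − C·h); consequently, if h > 1/C then Δd̄¹ < Δd̄², and if h < 1/C then Δd̄¹ > Δd̄². -/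
/-- Algebraic core of Theorem 3.3: with `Δd̄ⁱ = (2C/((C−1)N²))(d_outⁱ − (C−1) d_inⁱ)`,
`d_out¹ − d_out² = (1−h) Δs`, `d_in¹ − d_in² = h Δs`, and `Δs > 0`, one has
`Δd̄¹ − Δd̄² = (2C/((C−1)N²)) Δs (1 − C h)`; hence `h > 1/C` gives `Δd̄¹ < Δd̄²`
and `h < 1/C` gives `Δd̄¹ > Δd̄²`. -/
theorem stmt10 (C N : ℕ) (hC : 2 ≤ C) (hN : 1 ≤ N)
    (h Δs din1 din2 dout1 dout2 : ℝ)
    (hΔs : 0 < Δs)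
    (hout : dout1 - dout2 = (1 - h) * Δs)
    (hin : din1 - din2 = h * Δs) :
    (2 * (C : ℝ) / (((C : ℝ) - 1) * (N : ℝ) ^ 2)) * (dout1 - ((C : ℝ) - 1) * din1)
        - (2 * (C : ℝ) / (((C : ℝ) - 1) * (N : ℝ) ^ 2)) * (dout2 - ((C : ℝ) - 1) * din2)
      = (2 * (C : ℝ) / (((C : ℝ) - 1) * (N : ℝ) ^ 2)) * Δs * (1 - (C : ℝ) * h) ∧
    (h > 1 / (C : ℝ) →
      (2 * (C : ℝ) / (((C : ℝ) - 1) * (N : ℝ) ^ 2)) * (dout1 - ((C : ℝ) - 1) * din1)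
        < (2 * (C : ℝ) / (((C : ℝ) - 1) * (N : ℝ) ^ 2)) * (dout2 - ((C : ℝ) - 1) * din2)) ∧
    (h < 1 / (C : ℝ) →
      (2 * (C : ℝ) / (((C : ℝ) - 1) * (N : ℝ) ^ 2)) * (dout1 - ((C : ℝ) - 1) * din1)
        > (2 * (C : ℝ) / (((C : ℝ) - 1) * (N : ℝ) ^ 2)) * (dout2 - ((C : ℝ) - 1) * din2)) := by
  have hC1 : (1:ℝ) < (C:ℝ) := by exact_mod_cast Nat.lt_of_lt_of_le one_lt_two hC
  have hCpos : (0:ℝ) < (C:ℝ) := lt_trans one_pos hC1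
  have hN0 : (0:ℝ) < (N:ℝ) := by exact_mod_cast hN
  have hC1' : (0:ℝ) < (C:ℝ) - 1 := by linarith
  have hden : (0:ℝ) < ((C:ℝ) - 1) * (N:ℝ)^2 := by positivity
  have hcoef : (0:ℝ) < 2 * (C:ℝ) / (((C:ℝ) - 1) * (N:ℝ)^2) := by positivity
  have key : (2 * (C : ℝ) / (((C : ℝ) - 1) * (N : ℝ) ^ 2)) * (dout1 - ((C : ℝ) - 1) * din1)
      - (2 * (C : ℝ) / (((C : ℝ) - 1) * (N : ℝ) ^ 2)) * (dout2 - ((C : ℝ) - 1) * din2)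
      = (2 * (C : ℝ) / (((C : ℝ) - 1) * (N : ℝ) ^ 2)) * Δs * (1 - (C : ℝ) * h) := by
    have : (dout1 - ((C : ℝ) - 1) * din1) - (dout2 - ((C : ℝ) - 1) * din2)
        = Δs * (1 - (C:ℝ) * h) := by nlinarith [hout, hin]
    nlinarith [this]
  refine ⟨key, ?_, ?_⟩
  · intro hh
    have h1 : (1:ℝ) - (C:ℝ) * h < 0 := by
      have := (div_lt_iff₀ hCpos).mp hh
      linarith [mul_comm h (C:ℝ)]
    have := mul_neg_of_pos_of_neg (mul_pos hcoef hΔs) h1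
    linarith [key]
  · intro hh
    have h1 : (0:ℝ) < 1 - (C:ℝ) * h := by
      have := (lt_div_iff₀ hCpos).mp hh
      nlinarith [this]
    have := mul_pos (mul_pos hcoef hΔs) h1
    linarith [key]
end
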